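/- Let N ≥ 2, g ≥ 1, and let a_0, …, a_{Ng−1} be complex numbers (a_j := 0 outside {0,…,Ng−1}) satisfying Σ_{k∈ℤ} a_{k+Nl} · conj(a_k) = N·δ_{0,l} for all l ∈ ℤ. Then the operator S_0 : ℓ²(ℤ) → ℓ²(ℤ) defined by (S_0 ξ)_k = (1/√N) Σ_{l∈ℤ} a_{k−Nl} ξ_l is a well-defined bounded linear isometry. -/

import Mathlib

open MeasureTheory Complex Real
open scoped ComplexConjugate

noncomputable section

/-- For scale `N ≥ 2`, if `a₀,…,a_{Ng−1}` satisfy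
`∑ₖ a_{k+Nl} a̅ₖ = N δ_{0,l}`, then `(S₀ξ)ₖ = N^{-1/2} ∑ₗ a_{k−Nl} ξₗ` defines a
bounded linear isometry of `ℓ²(ℤ)`. -/
theorem stmt3 (N g : ℕ) (hN : 2 ≤ N) (hg : 1 ≤ g) (a : ℤ → ℂ)
    (hsupp : ∀ j : ℤ, (j < 0 ∨ (N * g : ℤ) ≤ j) → a j = 0)
    (horth : ∀ l : ℤ, ∑' k : ℤ, a (k + N * l) * conj (a k)
      = if l = 0 then (N : ℂ) else 0) :
    ∃ S : lp (fun _ : ℤ => ℂ) 2 →ₗᵢ[ℂ] lp (fun _ : ℤ => ℂ) 2,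
      ∀ (ξ : lp (fun _ : ℤ => ℂ) 2) (k : ℤ),
        (S ξ : ∀ _ : ℤ, ℂ) k
          = ((Real.sqrt N : ℂ))⁻¹ * ∑' l : ℤ, a (k - N * l) * ξ l := by
  classical
  set c : ℂ := ((Real.sqrt N : ℝ) : ℂ)⁻¹ with hc
  have hNpos : (0 : ℝ) < N := by positivity
  have hsqrt_pos : (0 : ℝ) < Real.sqrt N := Real.sqrt_pos.mpr hNpos
  -- the "columns"
  set wf : ℤ → ℤ → ℂ := fun l k => c * a (k - N * l) with hwf
  have hmem : ∀ l, Memℓp (wf l) 2 := by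
    intro l
    apply memℓp_gen
    apply summable_of_finite_support
    apply Set.Finite.subset (Set.finite_Icc (N * l) (N * l + N * g))
    intro k hk
    simp only [Function.mem_support] at hk
    by_contra hkn
    apply hk
    simp only [Set.mem_Icc, not_and_or, not_le] at hkn
    have : a (k - N * l) = 0 := by
      apply hsupp
      rcases hkn with h | h
      · left; omega
      · right; omega
    simp [wf, this]
  set w : ℤ → lp (fun _ : ℤ => ℂ) 2 := fun l => ⟨wf l, hmem l⟩ with hw
  have hw_apply : ∀ l k, (w l : ∀ _ : ℤ, ℂ) k = c * a (k - N * l) := fun l k => rfl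
  -- inner products
  have hinner : ∀ l m : ℤ, (inner ℂ (w l) (w m) : ℂ) = if l = m then 1 else 0 := by
    intro l m
    rw [lp.inner_eq_tsum]
    have h1 : ∀ k : ℤ, (inner ℂ ((w l : ∀ _ : ℤ, ℂ) k) ((w m : ∀ _ : ℤ, ℂ) k) : ℂ)
        = (c * c) * (conj (a (k - N * l)) * a (k - N * m)) := by
      intro k
      rw [hw_apply, hw_apply]
      simp only [RCLike.inner_apply, map_mul, hc, map_inv₀, Complex.conj_ofReal]
      ring
    simp only [h1]
    rw [tsum_mul_left]
    have h2 : (∑' k : ℤ, conj (a (k - N * l)) * a (k - N * m))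
        = ∑' k : ℤ, conj (a (k + N * (m - l)) * conj (a k)) := by
      rw [← (Equiv.addRight ((N : ℤ) * m)).tsum_eq
        (fun k => conj (a (k - N * l)) * a (k - N * m))]
      congr 1
      funext k
      simp only [Equiv.coe_addRight, map_mul, Complex.conj_conj]
      rw [show k + (N : ℤ) * m - N * m = k by ring,
        show k + (N : ℤ) * m - N * l = k + N * (m - l) by ring]
    have key : (∑' k : ℤ, conj (a (k + N * (m - l)) * conj (a k)))
        = conj (if m - l = 0 then (N : ℂ) else 0) := by
      simp only [starRingEnd_apply]
      rw [← tsum_star]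
      exact congrArg star (horth (m - l))
    rw [h2, key]
    by_cases h : l = m
    · subst h
      simp only [sub_self, if_pos rfl, if_pos rfl]
      have : c * c * star (N : ℂ) = 1 := by
        simp only [hc, star_def]
        rw [← Complex.ofReal_natCast, Complex.conj_ofReal]
        rw [← Complex.ofReal_inv, ← Complex.ofReal_mul, ← Complex.ofReal_mul]
        rw [← Real.sqrt_mul_self hNpos.le]
        field_simp
        rw [Real.sq_sqrt (Real.sqrt_nonneg _), div_self (Real.sqrt_pos.mpr (pow_pos hNpos 2)).ne', Complex.ofReal_one]
      simpa using this
    · rw [if_neg (by omega : ¬ m - l = 0), if_neg h]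
      simp
  have hnorm : ∀ l, ‖w l‖ = 1 := by
    intro l
    have h := hinner l l
    rw [if_pos rfl] at h
    have := @inner_self_eq_norm_sq_to_K ℂ _ _ _ _ (w l)
    rw [h] at this
    have h3 : ((‖w l‖ : ℂ))^2 = 1 := this.symm
    rw [← Complex.ofReal_pow, ← Complex.ofReal_one] at h3
    have h4 := Complex.ofReal_injective h3
    nlinarith [norm_nonneg (w l), h4]
  -- the isometries ℂ → lp
  set V : ∀ _ : ℤ, ℂ →ₗᵢ[ℂ] lp (fun _ : ℤ => ℂ) 2 := fun l =>
    { toLinearMap := LinearMap.toSpanSingleton ℂ _ (w l)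
      norm_map' := fun z => by
        simp [LinearMap.toSpanSingleton_apply, norm_smul, hnorm l] } with hV
  have hV_apply : ∀ l (z : ℂ), V l z = z • w l := fun l z => rfl
  have hOrth : OrthogonalFamily ℂ (fun _ : ℤ => ℂ) V := by
    intro i j hij x y
    rw [hV_apply, hV_apply, inner_smul_left, inner_smul_right, hinner i j,
      if_neg hij]
    ring
  refine ⟨hOrth.linearIsometry, ?_⟩
  intro ξ k
  have hsum := hOrth.hasSum_linearIsometry ξ
  -- evaluation at k as a continuous linear map
  let ev : lp (fun _ : ℤ => ℂ) 2 →L[ℂ] ℂ :=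
    LinearMap.mkContinuous
      { toFun := fun f => (f : ∀ _ : ℤ, ℂ) k
        map_add' := fun f h => by simp
        map_smul' := fun r f => by simp }
      1 (fun f => by
        rw [one_mul]; exact lp.norm_apply_le_norm (by norm_num) f k)
  have hev : ∀ f : lp (fun _ : ℤ => ℂ) 2, ev f = (f : ∀ _ : ℤ, ℂ) k := fun f => rfl
  have hsum2 := (hsum.mapL ev)
  simp only [hev] at hsum2
  have h3 : ∀ l : ℤ, ((V l (ξ l) : ∀ _ : ℤ, ℂ) k) = c * (a (k - N * l) * ξ l) := by
    intro l
    rw [hV_apply]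
    have := lp.coeFn_smul (ξ l) (w l)
    rw [show ((ξ l • w l : lp (fun _ : ℤ => ℂ) 2) : ∀ _ : ℤ, ℂ) k
      = ξ l • ((w l : ∀ _ : ℤ, ℂ) k) by rw [this]; rfl]
    rw [hw_apply]
    simp only [smul_eq_mul]
    ring
  simp only [h3] at hsum2
  rw [hsum2.tsum_eq.symm, tsum_mul_left]
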